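/- Let T_n be the sequence of polynomials defined by T_0(x) = x and T_n(x) = (1 - x²)·T_{n-1}'(x) for n ≥ 1. Then for every real x with |x| < 1 and every complex (or real) z in a sufficiently small neighborhood of 0, the generating function satisfies Σ_{n≥0} T_n(x) z^n / n! = (sinh z + x cosh z)/(cosh z + x sinh z). -/

import Mathlib

open Polynomial Real

noncomputable def T : ℕ → Polynomial ℚ
  | 0 => Polynomial.X
  | n + 1 => (1 - Polynomial.X ^ 2) * Polynomial.derivative (T n)

section aux

variable (x : ℝ)

private noncomputable def fgen (z : ℝ) : ℝ :=
    (Real.sinh z + x * Real.cosh z) / (Real.cosh z + x * Real.sinh z)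

private lemma analyticAt_sinh' (z : ℝ) : AnalyticAt ℝ Real.sinh z := by
  have : Real.sinh = fun z => (Real.exp z - Real.exp (-z)) / 2 := by
    funext z; exact Real.sinh_eq z
  rw [this]
  exact ((analyticAt_rexp).sub ((analyticAt_rexp).comp (analyticAt_id.neg))).div
    analyticAt_const (by norm_num)

private lemma analyticAt_cosh' (z : ℝ) : AnalyticAt ℝ Real.cosh z := by
  have : Real.cosh = fun z => (Real.exp z + Real.exp (-z)) / 2 := by
    funext z; exact Real.cosh_eq z
  rw [this]
  exact ((analyticAt_rexp).add ((analyticAt_rexp).comp (analyticAt_id.neg))).div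
    analyticAt_const (by norm_num)

private lemma hasDerivAt_fgen {z : ℝ} (hz : Real.cosh z + x * Real.sinh z ≠ 0) :
    HasDerivAt (fgen x) (1 - (fgen x z) ^ 2) z := by
  have hnum : HasDerivAt (fun w => Real.sinh w + x * Real.cosh w)
      (Real.cosh z + x * Real.sinh z) z :=
    (Real.hasDerivAt_sinh z).add ((Real.hasDerivAt_cosh z).const_mul x)
  have hden : HasDerivAt (fun w => Real.cosh w + x * Real.sinh w)
      (Real.sinh z + x * Real.cosh z) z :=
    (Real.hasDerivAt_cosh z).add ((Real.hasDerivAt_sinh z).const_mul x)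
  have := hnum.div hden hz
  refine this.congr_deriv ?_
  unfold fgen
  field_simp

private lemma iteratedDeriv_fgen (n : ℕ) :
    ∀ z : ℝ, Real.cosh z + x * Real.sinh z ≠ 0 →
      iteratedDeriv n (fgen x) z = Polynomial.aeval (fgen x z) (T n) := by
  induction n with
  | zero => intro z _; simp [T]
  | succ n ih =>
    intro z hz
    have hU : IsOpen {w : ℝ | Real.cosh w + x * Real.sinh w ≠ 0} :=
      isOpen_ne.preimage (by fun_prop)
    have hmem : {w : ℝ | Real.cosh w + x * Real.sinh w ≠ 0} ∈ nhds z :=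
      hU.mem_nhds hz
    have heq : iteratedDeriv n (fgen x) =ᶠ[nhds z]
        fun w => Polynomial.aeval (fgen x w) (T n) := by
      filter_upwards [hmem] with w hw using ih w hw
    rw [iteratedDeriv_succ, heq.deriv_eq]
    -- compute the derivative of w ↦ aeval (fgen x w) (T n)
    set S : Polynomial ℝ := (T n).map (algebraMap ℚ ℝ) with hS
    have haev : ∀ y : ℝ, Polynomial.aeval y (T n) = S.eval y := by
      intro y; rw [Polynomial.aeval_def, ← Polynomial.eval_map]
    have haev' : ∀ y : ℝ, Polynomial.aeval y (Polynomial.derivative (T n)) =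
        (Polynomial.derivative S).eval y := by
      intro y
      rw [Polynomial.aeval_def, ← Polynomial.eval_map, hS, Polynomial.derivative_map]
    have hd : HasDerivAt (fun w => Polynomial.aeval (fgen x w) (T n))
        ((Polynomial.derivative S).eval (fgen x z) * (1 - (fgen x z) ^ 2)) z := by
      simp only [haev]
      exact (S.hasDerivAt (fgen x z)).comp z (hasDerivAt_fgen x hz)
    rw [hd.deriv]
    show _ = Polynomial.aeval (fgen x z) ((1 - Polynomial.X ^ 2) * Polynomial.derivative (T n))
    rw [map_mul, haev']
    simp [mul_comm]

end aux

theorem generating_function_T (x : ℝ) (hx : |x| < 1) :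
    ∃ ε > (0 : ℝ), ∀ z : ℝ, |z| < ε →
      HasSum (fun n : ℕ => (Polynomial.aeval x (T n)) * z ^ n / (Nat.factorial n))
        ((Real.sinh z + x * Real.cosh z) / (Real.cosh z + x * Real.sinh z)) := by
  have hden0 : Real.cosh 0 + x * Real.sinh 0 ≠ 0 := by simp
  have hA : AnalyticAt ℝ (fgen x) 0 := by
    exact (((analyticAt_sinh' 0).add (analyticAt_const.mul (analyticAt_cosh' 0))).div
      (((analyticAt_cosh' 0).add (analyticAt_const.mul (analyticAt_sinh' 0)))) hden0)
  obtain ⟨p, hp⟩ := hA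
  obtain ⟨r, hr⟩ := hp
  obtain ⟨ε, hε0, hεr⟩ := ENNReal.lt_iff_exists_real_btwn.mp
    (show (0 : ENNReal) < r from hr.r_pos)
  refine ⟨ε, ENNReal.ofReal_pos.mp hεr.1, ?_⟩
  intro z hz
  have hzball : z ∈ Metric.eball (0 : ℝ) r := by
    rw [Metric.mem_eball, edist_dist]
    calc ENNReal.ofReal (dist z 0) < ENNReal.ofReal ε := by
          rw [Real.dist_eq, sub_zero]
          exact (ENNReal.ofReal_lt_ofReal_iff (lt_of_le_of_lt (abs_nonneg z) hz)).mpr (by simpa using hz)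
      _ < r := hεr.2
  have hsum := hr.hasSum_iteratedFDeriv hzball
  have hcoef : ∀ n : ℕ, iteratedDeriv n (fgen x) 0 = Polynomial.aeval x (T n) := by
    intro n
    have := iteratedDeriv_fgen x n 0 hden0
    rwa [show fgen x 0 = x by simp [fgen]] at this
  have : HasSum (fun n : ℕ => (Polynomial.aeval x (T n)) * z ^ n / (Nat.factorial n))
      (fgen x (0 + z)) := by
    convert hsum using 2 with n
    · rfl
    rw [iteratedFDeriv_apply_eq_iteratedDeriv_mul_prod, hcoef n]
    simp [smul_eq_mul]
    ring
  simpa [fgen] using this
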